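/- Let m ≥ 1 be an integer and let 𝔽_q be the finite field with q = 2^m elements. If a, b, c are pairwise distinct nonzero elements of 𝔽_q with a + b + c = 0, then a³ + b³ + c³ ≠ 0. -/
import Mathlib

/-- In the finite field `𝔽_q` with `q = 2^m` elements, if `a, b, c` are
pairwise distinct nonzero elements with `a + b + c = 0`, then `a³ + b³ + c³ ≠ 0`. -/
theorem stmt_9 (m : ℕ) (hm : 1 ≤ m) (F : Type) [Field F] [Fintype F]
    (hF : Fintype.card F = 2 ^ m)
    (a b c : F) (ha : a ≠ 0) (hb : b ≠ 0) (hc : c ≠ 0)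
    (hab : a ≠ b) (hac : a ≠ c) (hbc : b ≠ c)
    (hsum : a + b + c = 0) :
    a ^ 3 + b ^ 3 + c ^ 3 ≠ 0 := by
  have hcard : ((Fintype.card F : F)) = 0 := FiniteField.cast_card_eq_zero F
  rw [hF] at hcard
  push_cast at hcard
  have h2 : (2 : F) = 0 := by
    have := pow_eq_zero_iff (n := m) (by omega) |>.mp hcard
    exact this
  have key : a ^ 3 + b ^ 3 + c ^ 3 = a * b * c := by
    linear_combination (a^2 + b^2 + c^2 - a*b - a*c - b*c) * hsum + (a*b*c) * h2
  rw [key]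
  exact mul_ne_zero (mul_ne_zero ha hb) hc
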